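/- arXiv:2308.02736 — 3 statements merged into one kernel-verified Lean document; each statement's English description precedes it below -/
import Mathlib

section
/- Let 0 ≤ α < n and let b be any locally integrable function on ℚ_p^n. Then for every x with M_α^p(f)(x) < ∞, one has |[b, M_α^p](f)(x)| ≤ M_{α,b}^p(f)(x) + 2 b^−(x) M_α^p(f)(x), where b^−(x) = max(−b(x), 0). -/
open MeasureTheory ENNReal

/-- The closed `p`-adic ball in `ℚ_p^n` of radius `p^γ` centered at `x`. -/
noncomputable def pBall (p : ℕ) [Fact p.Prime] (n : ℕ) (γ : ℤ) (x : Fin n → ℚ_[p]) :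
    Set (Fin n → ℚ_[p]) := Metric.closedBall x ((p : ℝ) ^ γ)

/-- The `p`-adic fractional maximal function
`M_α^p(f)(x) = sup_γ |B_γ(x)|^{α/n−1} ∫_{B_γ(x)} |f|`. -/
noncomputable def fracMax (p : ℕ) [Fact p.Prime] (n : ℕ)
    [MeasurableSpace (Fin n → ℚ_[p])] (μ : Measure (Fin n → ℚ_[p])) (α : ℝ)
    (f : (Fin n → ℚ_[p]) → ℝ) (x : Fin n → ℚ_[p]) : ENNReal :=
  ⨆ γ : ℤ, μ (pBall p n γ x) ^ (α / n - 1) *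
    ∫⁻ y in pBall p n γ x, ENNReal.ofReal |f y| ∂μ

/-- The maximal commutator
`M_{α,b}^p(f)(x) = sup_γ |B_γ(x)|^{α/n−1} ∫_{B_γ(x)} |b(x)−b(y)||f(y)| dy`. -/
noncomputable def maxComm (p : ℕ) [Fact p.Prime] (n : ℕ)
    [MeasurableSpace (Fin n → ℚ_[p])] (μ : Measure (Fin n → ℚ_[p])) (α : ℝ)
    (b f : (Fin n → ℚ_[p]) → ℝ) (x : Fin n → ℚ_[p]) : ENNReal :=
  ⨆ γ : ℤ, μ (pBall p n γ x) ^ (α / n - 1) *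
    ∫⁻ y in pBall p n γ x, ENNReal.ofReal (|b x - b y| * |f y|) ∂μ

/-- The nonlinear commutator `[b, M_α^p](f) = b · M_α^p(f) − M_α^p(b f)` (as a real
number, via `ENNReal.toReal`). -/
noncomputable def nonlinComm (p : ℕ) [Fact p.Prime] (n : ℕ)
    [MeasurableSpace (Fin n → ℚ_[p])] (μ : Measure (Fin n → ℚ_[p])) (α : ℝ)
    (b f : (Fin n → ℚ_[p]) → ℝ) (x : Fin n → ℚ_[p]) : ℝ :=
  b x * (fracMax p n μ α f x).toReal -
    (fracMax p n μ α (fun y => b y * f y) x).toReal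

/-- The local fractional maximal function relative to the ball `B = B_{γ₀}(x₀)`:
`M_{α,B}^p(b)(y) = sup_{B_γ(y) ⊆ B} |B_γ(y)|^{α/n−1} ∫_{B_γ(y)} |b|`. -/
noncomputable def localFracMax (p : ℕ) [Fact p.Prime] (n : ℕ)
    [MeasurableSpace (Fin n → ℚ_[p])] (μ : Measure (Fin n → ℚ_[p])) (α : ℝ)
    (γ₀ : ℤ) (x₀ : Fin n → ℚ_[p]) (b : (Fin n → ℚ_[p]) → ℝ)
    (y : Fin n → ℚ_[p]) : ENNReal :=
  ⨆ (γ : ℤ) (_ : pBall p n γ y ⊆ pBall p n γ₀ x₀),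
    μ (pBall p n γ y) ^ (α / n - 1) *
      ∫⁻ z in pBall p n γ y, ENNReal.ofReal |b z| ∂μ

/-- The `p`-adic BMO seminorm `sup_B |B|^{−1} ∫_B |b − b_B|`. -/
noncomputable def bmoNorm (p : ℕ) [Fact p.Prime] (n : ℕ)
    [MeasurableSpace (Fin n → ℚ_[p])] (μ : Measure (Fin n → ℚ_[p]))
    (b : (Fin n → ℚ_[p]) → ℝ) : ENNReal :=
  ⨆ (γ : ℤ) (x : Fin n → ℚ_[p]), (μ (pBall p n γ x))⁻¹ *
    ∫⁻ y in pBall p n γ x, ENNReal.ofReal |b y - ⨍ z in pBall p n γ x, b z ∂μ| ∂μ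

/-- For `0 ≤ α < n`, any locally integrable `b`, and any point where `M_α^p(f)(x) < ∞`,
`|[b, M_α^p](f)(x)| ≤ M_{α,b}^p(f)(x) + 2 b⁻(x) M_α^p(f)(x)`. -/
theorem nonlinComm_le_maxComm_add (p : ℕ) [Fact p.Prime] (n : ℕ)
    [MeasurableSpace (Fin n → ℚ_[p])] [BorelSpace (Fin n → ℚ_[p])]
    (μ : Measure (Fin n → ℚ_[p])) [μ.IsAddHaarMeasure]
    (hμ : μ (Metric.closedBall 0 1) = 1)
    (α : ℝ) (hα₀ : 0 ≤ α) (hαn : α < n)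
    (b f : (Fin n → ℚ_[p]) → ℝ)
    (hbloc : LocallyIntegrable b μ) (hfloc : LocallyIntegrable f μ)
    (x : Fin n → ℚ_[p]) (hx : fracMax p n μ α f x < ⊤) :
    ENNReal.ofReal |nonlinComm p n μ α b f x| ≤
      maxComm p n μ α b f x +
        ENNReal.ofReal (2 * max (-(b x)) 0) * fracMax p n μ α f x := by

  classical
  set A := fracMax p n μ α f x with hA
  set B := fracMax p n μ α (fun y => b y * f y) x with hB
  set C := maxComm p n μ α b f x with hC
  have hb : AEMeasurable b μ := hbloc.aestronglyMeasurable.aemeasurable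
  have hf : AEMeasurable f μ := hfloc.aestronglyMeasurable.aemeasurable
  set c := |b x| with hc
  have hc0 : 0 ≤ c := abs_nonneg _
  -- key inequality 1 : |b x| * A ≤ B + C
  have key1 : ENNReal.ofReal c * A ≤ B + C := by
    rw [hA, fracMax, ENNReal.mul_iSup]
    refine iSup_le fun γ => ?_
    have hint : ENNReal.ofReal c * ∫⁻ y in pBall p n γ x, ENNReal.ofReal |f y| ∂μ ≤
        (∫⁻ y in pBall p n γ x, ENNReal.ofReal |b y * f y| ∂μ) +
        ∫⁻ y in pBall p n γ x, ENNReal.ofReal (|b x - b y| * |f y|) ∂μ := by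
      have m1 : AEMeasurable (fun y => ENNReal.ofReal |b y * f y|) μ :=
        (measurable_abs.comp_aemeasurable (hb.mul hf)).ennreal_ofReal
      rw [← lintegral_const_mul' _ _ ENNReal.ofReal_ne_top,
        ← lintegral_add_left' m1.restrict]
      refine lintegral_mono fun y => ?_
      rw [← ENNReal.ofReal_mul hc0,
        ← ENNReal.ofReal_add (abs_nonneg _) (mul_nonneg (abs_nonneg _) (abs_nonneg _))]
      refine ENNReal.ofReal_le_ofReal ?_
      have h1 : c - |b y| ≤ |b x - b y| := abs_sub_abs_le_abs_sub (b x) (b y)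
      have h2 : (0:ℝ) ≤ |f y| := abs_nonneg _
      rw [abs_mul]
      nlinarith
    calc ENNReal.ofReal c * (μ (pBall p n γ x) ^ (α / n - 1) *
          ∫⁻ y in pBall p n γ x, ENNReal.ofReal |f y| ∂μ)
        = μ (pBall p n γ x) ^ (α / n - 1) *
          (ENNReal.ofReal c * ∫⁻ y in pBall p n γ x, ENNReal.ofReal |f y| ∂μ) := by ring
      _ ≤ μ (pBall p n γ x) ^ (α / n - 1) *
          ((∫⁻ y in pBall p n γ x, ENNReal.ofReal |b y * f y| ∂μ) +
           ∫⁻ y in pBall p n γ x, ENNReal.ofReal (|b x - b y| * |f y|) ∂μ) :=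
          mul_le_mul_right hint _
      _ = μ (pBall p n γ x) ^ (α / n - 1) *
          (∫⁻ y in pBall p n γ x, ENNReal.ofReal |b y * f y| ∂μ) +
          μ (pBall p n γ x) ^ (α / n - 1) *
          (∫⁻ y in pBall p n γ x, ENNReal.ofReal (|b x - b y| * |f y|) ∂μ) := by ring
      _ ≤ B + C := by
          gcongr
          · exact le_iSup (fun γ => μ (pBall p n γ x) ^ (α / n - 1) *
              ∫⁻ y in pBall p n γ x, ENNReal.ofReal |b y * f y| ∂μ) γ
          · exact le_iSup (fun γ => μ (pBall p n γ x) ^ (α / n - 1) *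
              ∫⁻ y in pBall p n γ x, ENNReal.ofReal (|b x - b y| * |f y|) ∂μ) γ
  -- key inequality 2 : B ≤ |b x| * A + C
  have key2 : B ≤ ENNReal.ofReal c * A + C := by
    rw [hB, fracMax]
    refine iSup_le fun γ => ?_
    have hint : (∫⁻ y in pBall p n γ x, ENNReal.ofReal |b y * f y| ∂μ) ≤
        ENNReal.ofReal c * (∫⁻ y in pBall p n γ x, ENNReal.ofReal |f y| ∂μ) +
        ∫⁻ y in pBall p n γ x, ENNReal.ofReal (|b x - b y| * |f y|) ∂μ := by
      have m2 : AEMeasurable (fun y => ENNReal.ofReal (c * |f y|)) μ :=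
        ((measurable_abs.comp_aemeasurable hf).const_mul c).ennreal_ofReal
      rw [← lintegral_const_mul' _ _ ENNReal.ofReal_ne_top]
      simp only [← ENNReal.ofReal_mul hc0]
      rw [← lintegral_add_left' m2.restrict]
      refine lintegral_mono fun y => ?_
      rw [← ENNReal.ofReal_add (mul_nonneg hc0 (abs_nonneg _))
          (mul_nonneg (abs_nonneg _) (abs_nonneg _))]
      refine ENNReal.ofReal_le_ofReal ?_
      have h1 : |b y| - c ≤ |b x - b y| := by
        have := abs_sub_abs_le_abs_sub (b y) (b x)
        rw [abs_sub_comm] at this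
        exact this
      have h2 : (0:ℝ) ≤ |f y| := abs_nonneg _
      rw [abs_mul]
      nlinarith
    calc μ (pBall p n γ x) ^ (α / n - 1) *
          ∫⁻ y in pBall p n γ x, ENNReal.ofReal |b y * f y| ∂μ
        ≤ μ (pBall p n γ x) ^ (α / n - 1) *
          (ENNReal.ofReal c * (∫⁻ y in pBall p n γ x, ENNReal.ofReal |f y| ∂μ) +
           ∫⁻ y in pBall p n γ x, ENNReal.ofReal (|b x - b y| * |f y|) ∂μ) :=
          mul_le_mul_right hint _
      _ = ENNReal.ofReal c * (μ (pBall p n γ x) ^ (α / n - 1) *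
          ∫⁻ y in pBall p n γ x, ENNReal.ofReal |f y| ∂μ) +
          μ (pBall p n γ x) ^ (α / n - 1) *
          (∫⁻ y in pBall p n γ x, ENNReal.ofReal (|b x - b y| * |f y|) ∂μ) := by ring
      _ ≤ ENNReal.ofReal c * A + C := by
          gcongr
          · exact le_iSup (fun γ => μ (pBall p n γ x) ^ (α / n - 1) *
              ∫⁻ y in pBall p n γ x, ENNReal.ofReal |f y| ∂μ) γ
          · exact le_iSup (fun γ => μ (pBall p n γ x) ^ (α / n - 1) *
              ∫⁻ y in pBall p n γ x, ENNReal.ofReal (|b x - b y| * |f y|) ∂μ) γ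
  by_cases hCtop : C = ⊤
  · rw [hCtop, top_add]; exact le_top
  · have hA' : A ≠ ⊤ := hx.ne
    have hcA : ENNReal.ofReal c * A ≠ ⊤ :=
      ENNReal.mul_ne_top ENNReal.ofReal_ne_top hA'
    have hB' : B ≠ ⊤ := by
      refine ne_top_of_le_ne_top ?_ key2
      exact ENNReal.add_ne_top.mpr ⟨hcA, hCtop⟩
    have ha0 : (0:ℝ) ≤ A.toReal := ENNReal.toReal_nonneg
    have hbb0 : (0:ℝ) ≤ B.toReal := ENNReal.toReal_nonneg
    have hcc0 : (0:ℝ) ≤ C.toReal := ENNReal.toReal_nonneg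
    have h1r : c * A.toReal ≤ B.toReal + C.toReal := by
      have := ENNReal.toReal_mono (ENNReal.add_ne_top.mpr ⟨hB', hCtop⟩) key1
      rwa [ENNReal.toReal_mul, ENNReal.toReal_ofReal hc0,
        ENNReal.toReal_add hB' hCtop] at this
    have h2r : B.toReal ≤ c * A.toReal + C.toReal := by
      have := ENNReal.toReal_mono (ENNReal.add_ne_top.mpr ⟨hcA, hCtop⟩) key2
      rwa [ENNReal.toReal_add hcA hCtop, ENNReal.toReal_mul,
        ENNReal.toReal_ofReal hc0] at this
    have hm0 : (0:ℝ) ≤ 2 * max (-(b x)) 0 := by positivity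
    have hRHS : C + ENNReal.ofReal (2 * max (-(b x)) 0) * A ≠ ⊤ :=
      ENNReal.add_ne_top.mpr ⟨hCtop,
        ENNReal.mul_ne_top ENNReal.ofReal_ne_top hA'⟩
    refine ENNReal.ofReal_le_of_le_toReal ?_
    rw [ENNReal.toReal_add hCtop (ENNReal.mul_ne_top ENNReal.ofReal_ne_top hA'),
      ENNReal.toReal_mul, ENNReal.toReal_ofReal hm0]
    show |nonlinComm p n μ α b f x| ≤
      C.toReal + 2 * max (-(b x)) 0 * A.toReal
    have hnc : nonlinComm p n μ α b f x = b x * A.toReal - B.toReal := rfl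
    rw [hnc, abs_le]
    rcases le_total (b x) 0 with hbx | hbx
    · have hc' : c = -(b x) := abs_of_nonpos hbx
      have hmax : max (-(b x)) 0 = -(b x) := max_eq_left (by linarith)
      rw [hmax]
      constructor <;> nlinarith [mul_nonpos_of_nonpos_of_nonneg hbx ha0]
    · have hc' : c = b x := abs_of_nonneg hbx
      have hmax : max (-(b x)) 0 = 0 := max_eq_right (by linarith)
      rw [hmax]
      constructor <;> nlinarith
end

section
/- Let 0 < α < n, 1 < r < n/α, 1/q = 1/r − α/n, and b locally integrable on ℚ_p^n. If [b, M_α^p] is bounded from L^r(ℚ_p^n) to L^q(ℚ_p^n), then sup over all p-adic balls B of (1/|B|_h) ∫_B |b(y) − |B|_h^{−α/n} M_{α,B}^p(b)(y)|^q dy is finite. -/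
open MeasureTheory ENNReal

set_option linter.unusedSectionVars false

section Helpers

variable (p : ℕ) [Fact p.Prime] (n : ℕ)

lemma pBall_mono {γ γ' : ℤ} (h : γ ≤ γ') (x : Fin n → ℚ_[p]) :
    pBall p n γ x ⊆ pBall p n γ' x := by
  apply Metric.closedBall_subset_closedBall
  exact zpow_le_zpow_right₀ (by exact_mod_cast (Fact.out : p.Prime).one_lt.le) h

lemma pBall_subset_of_mem {γ : ℤ} {x y : Fin n → ℚ_[p]} (h : y ∈ pBall p n γ x) :
    pBall p n γ y ⊆ pBall p n γ x := by
  intro z hz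
  have hr : (0:ℝ) ≤ (p:ℝ) ^ γ := by positivity
  rw [pBall, Metric.mem_closedBall, dist_pi_le_iff hr] at *
  intro i
  exact le_trans (IsUltrametricDist.dist_triangle_max (z i) (y i) (x i))
    (max_le (hz i) (h i))

lemma pBall_eq_of_mem {γ : ℤ} {x y : Fin n → ℚ_[p]} (h : y ∈ pBall p n γ x) :
    pBall p n γ y = pBall p n γ x := by
  have hx : x ∈ pBall p n γ y := by
    rw [pBall, Metric.mem_closedBall, dist_comm]; exact h
  exact subset_antisymm (pBall_subset_of_mem p n h) (pBall_subset_of_mem p n hx)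

lemma mem_pBall_self {γ : ℤ} (x : Fin n → ℚ_[p]) : x ∈ pBall p n γ x :=
  Metric.mem_closedBall_self (by positivity)

lemma measurableSet_pBall [MeasurableSpace (Fin n → ℚ_[p])] [BorelSpace (Fin n → ℚ_[p])]
    {γ : ℤ} (x : Fin n → ℚ_[p]) : MeasurableSet (pBall p n γ x) :=
  Metric.isClosed_closedBall.measurableSet

variable [MeasurableSpace (Fin n → ℚ_[p])] [BorelSpace (Fin n → ℚ_[p])]
  (μ : Measure (Fin n → ℚ_[p])) [μ.IsAddHaarMeasure]

lemma pBall_measure_ne_zero {γ : ℤ} (x : Fin n → ℚ_[p]) : μ (pBall p n γ x) ≠ 0 :=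
  (Metric.measure_closedBall_pos μ x (zpow_pos (by exact_mod_cast (Fact.out : p.Prime).pos) γ)).ne'

lemma pBall_measure_ne_top {γ : ℤ} (x : Fin n → ℚ_[p]) : μ (pBall p n γ x) ≠ ⊤ :=
  ((isCompact_closedBall x _)).measure_lt_top.ne

lemma rpow_anti {a b : ENNReal} (hab : a ≤ b) {z : ℝ} (hz : z ≤ 0) : b ^ z ≤ a ^ z := by
  rw [← neg_neg z, ENNReal.rpow_neg b, ENNReal.rpow_neg a]
  exact ENNReal.inv_le_inv.mpr (ENNReal.rpow_le_rpow hab (neg_nonneg.mpr hz))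

section comp
variable {α : ℝ} (hα₀ : 0 < α) (hαn : α < n) {γ₀ : ℤ} {x y : Fin n → ℚ_[p]}

/-- `M_α(χ_B) = |B|^{α/n}` on `B`. -/
lemma fracMax_indicator (hα₀ : 0 < α) (hαn : α < n)
    (hy : y ∈ pBall p n γ₀ x) :
    fracMax p n μ α (Set.indicator (pBall p n γ₀ x) (fun _ => (1:ℝ))) y
      = μ (pBall p n γ₀ x) ^ (α / n) := by
  set B := pBall p n γ₀ x with hBdef
  have hB : MeasurableSet B := measurableSet_pBall p n x
  have hnn : 0 ≤ α / (n:ℝ) := by positivity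
  have hnp : α / (n:ℝ) - 1 ≤ 0 := by
    have hn : (0:ℝ) < n := lt_trans hα₀ hαn
    rw [sub_nonpos, div_le_one hn]
    exact hαn.le
  have hint : ∀ γ : ℤ, (∫⁻ z in pBall p n γ y,
      ENNReal.ofReal |Set.indicator B (fun _ => (1:ℝ)) z| ∂μ) = μ (B ∩ pBall p n γ y) := by
    intro γ
    have : ∀ z, ENNReal.ofReal |Set.indicator B (fun _ => (1:ℝ)) z|
        = Set.indicator B (fun _ => (1:ℝ≥0∞)) z := by
      intro z
      by_cases hz : z ∈ B <;> simp [hz]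
    simp [this, setLIntegral_indicator hB, Measure.restrict_apply hB]
  have hmul : ∀ {γ : ℤ} {w : Fin n → ℚ_[p]},
      μ (pBall p n γ w) ^ (α / n - 1) * μ (pBall p n γ w) = μ (pBall p n γ w) ^ (α / n) := by
    intro γ w
    calc μ (pBall p n γ w) ^ (α / n - 1) * μ (pBall p n γ w)
        = μ (pBall p n γ w) ^ (α / n - 1) * μ (pBall p n γ w) ^ (1:ℝ) := by
          rw [ENNReal.rpow_one]
      _ = μ (pBall p n γ w) ^ (α / n - 1 + 1) :=
          (ENNReal.rpow_add _ _ (pBall_measure_ne_zero p n μ w)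
            (pBall_measure_ne_top p n μ w)).symm
      _ = μ (pBall p n γ w) ^ (α / n) := by norm_num
  apply le_antisymm
  · refine iSup_le fun γ => ?_
    rw [hint]
    rcases le_total γ γ₀ with hγ | hγ
    · have hsub : pBall p n γ y ⊆ B := by
        rw [hBdef, ← pBall_eq_of_mem p n hy]
        exact pBall_mono p n hγ y
      rw [Set.inter_eq_self_of_subset_right hsub, hmul]
      exact ENNReal.rpow_le_rpow (measure_mono hsub) hnn
    · have hsub : B ⊆ pBall p n γ y := by
        rw [hBdef, ← pBall_eq_of_mem p n hy]
        exact pBall_mono p n hγ y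
      rw [Set.inter_eq_self_of_subset_left hsub]
      calc μ (pBall p n γ y) ^ (α / n - 1) * μ B
          ≤ μ B ^ (α / n - 1) * μ B :=
            mul_le_mul_left (rpow_anti (measure_mono hsub) hnp) _
        _ = μ B ^ (α / n) := hmul
  · refine le_trans ?_ (le_iSup _ γ₀)
    rw [hint, pBall_eq_of_mem p n hy, ← hBdef, Set.inter_self, hmul]

/-- `M_α(b·χ_B) = M_{α,B}(b)` on `B`. -/
lemma fracMax_mul_indicator (hα₀ : 0 < α) (hαn : α < n)
    (b : (Fin n → ℚ_[p]) → ℝ) (hy : y ∈ pBall p n γ₀ x) :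
    fracMax p n μ α (fun z => b z * Set.indicator (pBall p n γ₀ x) (fun _ => (1:ℝ)) z) y
      = localFracMax p n μ α γ₀ x b y := by
  set B := pBall p n γ₀ x with hBdef
  have hB : MeasurableSet B := measurableSet_pBall p n x
  have hnn : 0 ≤ α / (n:ℝ) := by positivity
  have hnp : α / (n:ℝ) - 1 ≤ 0 := by
    have hn : (0:ℝ) < n := lt_trans hα₀ hαn
    rw [sub_nonpos, div_le_one hn]
    exact hαn.le
  have hint : ∀ γ : ℤ, (∫⁻ z in pBall p n γ y,
      ENNReal.ofReal |b z * Set.indicator B (fun _ => (1:ℝ)) z| ∂μ)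
      = ∫⁻ z in B ∩ pBall p n γ y, ENNReal.ofReal |b z| ∂μ := by
    intro γ
    have : ∀ z, ENNReal.ofReal |b z * Set.indicator B (fun _ => (1:ℝ)) z|
        = Set.indicator B (fun w => ENNReal.ofReal |b w|) z := by
      intro z
      by_cases hz : z ∈ B <;> simp [hz]
    simp_rw [this]
    rw [setLIntegral_indicator hB]
  apply le_antisymm
  · refine iSup_le fun γ => ?_
    rw [hint]
    rcases le_total γ γ₀ with hγ | hγ
    · have hsub : pBall p n γ y ⊆ B := by
        rw [hBdef, ← pBall_eq_of_mem p n hy]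
        exact pBall_mono p n hγ y
      rw [Set.inter_eq_self_of_subset_right hsub]
      exact le_iSup₂_of_le γ hsub le_rfl
    · have hsub : B ⊆ pBall p n γ y := by
        rw [hBdef, ← pBall_eq_of_mem p n hy]
        exact pBall_mono p n hγ y
      rw [Set.inter_eq_self_of_subset_left hsub]
      have hByB : pBall p n γ₀ y = B := pBall_eq_of_mem p n hy
      refine le_iSup₂_of_le γ₀ (by rw [hByB]) ?_
      rw [hByB]
      exact mul_le_mul_left (rpow_anti (measure_mono hsub) hnp) _
  · refine iSup₂_le fun γ hsub => ?_
    refine le_trans ?_ (le_iSup _ γ)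
    rw [hint, Set.inter_eq_self_of_subset_right hsub]

end comp

end Helpers

/-- If `0 < α < n`, `1 < r < n/α`, `1/q = 1/r − α/n`, and the nonlinear commutator
`[b, M_α^p]` is bounded from `L^r(ℚ_p^n)` to `L^q(ℚ_p^n)`, then
`sup_B |B|⁻¹ ∫_B |b(y) − |B|^{−α/n} M_{α,B}^p(b)(y)|^q dy < ∞`. -/
theorem nonlinComm_bounded_implies_localFracMax_bound (p : ℕ) [Fact p.Prime] (n : ℕ)
    [MeasurableSpace (Fin n → ℚ_[p])] [BorelSpace (Fin n → ℚ_[p])]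
    (μ : Measure (Fin n → ℚ_[p])) [μ.IsAddHaarMeasure]
    (hμ : μ (Metric.closedBall 0 1) = 1)
    (α : ℝ) (hα₀ : 0 < α) (hαn : α < n)
    (b : (Fin n → ℚ_[p]) → ℝ) (hbloc : LocallyIntegrable b μ)
    (r q : ℝ) (hr : 1 < r) (hrn : r < n / α) (hq : 1 / q = 1 / r - α / n)
    (hbound : ∃ C : ENNReal, C ≠ ⊤ ∧
      ∀ f : (Fin n → ℚ_[p]) → ℝ, MemLp f (ENNReal.ofReal r) μ →
        eLpNorm (nonlinComm p n μ α b f) (ENNReal.ofReal q) μ ≤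
          C * eLpNorm f (ENNReal.ofReal r) μ) :
    ∃ C : ENNReal, C ≠ ⊤ ∧
      ∀ (γ : ℤ) (x : Fin n → ℚ_[p]),
        (μ (pBall p n γ x))⁻¹ *
            ∫⁻ y in pBall p n γ x,
              ENNReal.ofReal
                |b y - (μ (pBall p n γ x) ^ (-(α / n)) *
                    localFracMax p n μ α γ x b y).toReal| ^ q ∂μ ≤ C := by
  obtain ⟨C, hC, hCb⟩ := hbound
  have hn : (0:ℝ) < n := lt_trans hα₀ hαn
  have hr0 : (0:ℝ) < r := lt_trans one_pos hr
  have hα_lt : α / n < 1 / r := by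
    rw [div_lt_div_iff₀ hn hr0]
    nlinarith [(lt_div_iff₀ hα₀).mp hrn]
  have hq0 : (0:ℝ) < q := by
    have h1q : 0 < 1 / q := by rw [hq]; linarith
    exact one_div_pos.mp h1q
  have hqne : ENNReal.ofReal q ≠ 0 := by simp [ENNReal.ofReal_eq_zero, not_le, hq0]
  have hrne : ENNReal.ofReal r ≠ 0 := by simp [ENNReal.ofReal_eq_zero, not_le, hr0]
  refine ⟨C ^ q, ENNReal.rpow_ne_top_of_nonneg hq0.le hC, ?_⟩
  intro γ₀ x₀
  have hB : MeasurableSet (pBall p n γ₀ x₀) := measurableSet_pBall p n x₀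
  have h0 : μ (pBall p n γ₀ x₀) ≠ 0 := pBall_measure_ne_zero p n μ x₀
  have htop : μ (pBall p n γ₀ x₀) ≠ ⊤ := pBall_measure_ne_top p n μ x₀
  have hc0 : μ (pBall p n γ₀ x₀) ^ (α / n) ≠ 0 := by
    simp [ENNReal.rpow_eq_zero_iff, h0, htop]
  have hctop : μ (pBall p n γ₀ x₀) ^ (α / n) ≠ ⊤ :=
    ENNReal.rpow_ne_top_of_nonneg (by positivity) htop
  -- the test function
  have hf : MemLp (Set.indicator (pBall p n γ₀ x₀) (fun _ => (1:ℝ))) (ENNReal.ofReal r) μ :=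
    memLp_indicator_const _ hB 1 (Or.inr htop)
  have hnorm := hCb _ hf
  have hfr : eLpNorm (Set.indicator (pBall p n γ₀ x₀) (fun _ => (1:ℝ)))
      (ENNReal.ofReal r) μ = μ (pBall p n γ₀ x₀) ^ (1/r) := by
    rw [eLpNorm_indicator_const hB hrne ENNReal.ofReal_ne_top]
    simp [ENNReal.toReal_ofReal hr0.le]
  -- pointwise identity on B
  have key : ∀ y ∈ pBall p n γ₀ x₀,
      ENNReal.ofReal |b y - (μ (pBall p n γ₀ x₀) ^ (-(α / n)) *
          localFracMax p n μ α γ₀ x₀ b y).toReal|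
        = (μ (pBall p n γ₀ x₀) ^ (α / n))⁻¹ *
          ENNReal.ofReal |nonlinComm p n μ α b
            (Set.indicator (pBall p n γ₀ x₀) (fun _ => (1:ℝ))) y| := by
    intro y hy
    have hpos : 0 < (μ (pBall p n γ₀ x₀) ^ (α / n)).toReal :=
      ENNReal.toReal_pos hc0 hctop
    rw [nonlinComm, fracMax_indicator p n μ hα₀ hαn hy,
      fracMax_mul_indicator p n μ hα₀ hαn b hy, ENNReal.rpow_neg]
    have hL : ((μ (pBall p n γ₀ x₀) ^ (α / n))⁻¹ * localFracMax p n μ α γ₀ x₀ b y).toReal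
        = (μ (pBall p n γ₀ x₀) ^ (α / n)).toReal⁻¹ *
          (localFracMax p n μ α γ₀ x₀ b y).toReal := by
      rw [ENNReal.toReal_mul, ENNReal.toReal_inv]
    have habs : |b y - ((μ (pBall p n γ₀ x₀) ^ (α / n))⁻¹ *
          localFracMax p n μ α γ₀ x₀ b y).toReal|
        = (μ (pBall p n γ₀ x₀) ^ (α / n)).toReal⁻¹ *
          |b y * (μ (pBall p n γ₀ x₀) ^ (α / n)).toReal -
            (localFracMax p n μ α γ₀ x₀ b y).toReal| := by
      rw [hL]
      have h1 : b y - (μ (pBall p n γ₀ x₀) ^ (α / n)).toReal⁻¹ *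
            (localFracMax p n μ α γ₀ x₀ b y).toReal
          = (μ (pBall p n γ₀ x₀) ^ (α / n)).toReal⁻¹ *
            (b y * (μ (pBall p n γ₀ x₀) ^ (α / n)).toReal -
              (localFracMax p n μ α γ₀ x₀ b y).toReal) := by
        field_simp
      rw [h1, abs_mul, abs_of_nonneg (by positivity : (0:ℝ) ≤
        (μ (pBall p n γ₀ x₀) ^ (α / n)).toReal⁻¹)]
    rw [habs, ENNReal.ofReal_mul (by positivity), ENNReal.ofReal_inv_of_pos hpos,
      ENNReal.ofReal_toReal hctop]
  -- main estimate
  have hle : ∫⁻ y in pBall p n γ₀ x₀,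
      ENNReal.ofReal |b y - (μ (pBall p n γ₀ x₀) ^ (-(α / n)) *
          localFracMax p n μ α γ₀ x₀ b y).toReal| ^ q ∂μ
      ≤ ((μ (pBall p n γ₀ x₀) ^ (α / n))⁻¹) ^ q *
        (C * μ (pBall p n γ₀ x₀) ^ (1/r)) ^ q := by
    have step1 : ∫⁻ y in pBall p n γ₀ x₀,
        ENNReal.ofReal |b y - (μ (pBall p n γ₀ x₀) ^ (-(α / n)) *
            localFracMax p n μ α γ₀ x₀ b y).toReal| ^ q ∂μ
        = ∫⁻ y in pBall p n γ₀ x₀,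
            ((μ (pBall p n γ₀ x₀) ^ (α / n))⁻¹) ^ q *
            (ENNReal.ofReal |nonlinComm p n μ α b
              (Set.indicator (pBall p n γ₀ x₀) (fun _ => (1:ℝ))) y|) ^ q ∂μ := by
      refine setLIntegral_congr_fun hB (fun y hy => ?_)
      rw [key y hy, ENNReal.mul_rpow_of_nonneg _ _ hq0.le]
    rw [step1, lintegral_const_mul' _ _
      (ENNReal.rpow_ne_top_of_nonneg hq0.le (by simp [hc0]))]
    refine mul_le_mul_right ?_ _
    calc ∫⁻ y in pBall p n γ₀ x₀, (ENNReal.ofReal |nonlinComm p n μ α b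
            (Set.indicator (pBall p n γ₀ x₀) (fun _ => (1:ℝ))) y|) ^ q ∂μ
        ≤ ∫⁻ y, (ENNReal.ofReal |nonlinComm p n μ α b
            (Set.indicator (pBall p n γ₀ x₀) (fun _ => (1:ℝ))) y|) ^ q ∂μ :=
          setLIntegral_le_lintegral _ _
      _ = eLpNorm (nonlinComm p n μ α b
            (Set.indicator (pBall p n γ₀ x₀) (fun _ => (1:ℝ)))) (ENNReal.ofReal q) μ ^ q := by
          rw [eLpNorm_eq_lintegral_rpow_enorm_toReal hqne ENNReal.ofReal_ne_top,
            ENNReal.toReal_ofReal hq0.le, ← ENNReal.rpow_mul,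
            one_div_mul_cancel hq0.ne', ENNReal.rpow_one]
          simp_rw [Real.enorm_eq_ofReal_abs]
      _ ≤ (C * μ (pBall p n γ₀ x₀) ^ (1/r)) ^ q := by
          rw [← hfr]
          exact ENNReal.rpow_le_rpow hnorm hq0.le
  calc (μ (pBall p n γ₀ x₀))⁻¹ *
          ∫⁻ y in pBall p n γ₀ x₀, ENNReal.ofReal |b y -
            (μ (pBall p n γ₀ x₀) ^ (-(α / n)) *
              localFracMax p n μ α γ₀ x₀ b y).toReal| ^ q ∂μ
      ≤ (μ (pBall p n γ₀ x₀))⁻¹ * (((μ (pBall p n γ₀ x₀) ^ (α / n))⁻¹) ^ q *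
          (C * μ (pBall p n γ₀ x₀) ^ (1/r)) ^ q) := mul_le_mul_right hle _
    _ = C ^ q := by
        have e1 : ((μ (pBall p n γ₀ x₀) ^ (α / n))⁻¹) ^ q
            = μ (pBall p n γ₀ x₀) ^ (-(α / n) * q) := by
          rw [← ENNReal.rpow_neg, ← ENNReal.rpow_mul]
        have e2 : (C * μ (pBall p n γ₀ x₀) ^ (1/r)) ^ q
            = C ^ q * μ (pBall p n γ₀ x₀) ^ (1/r * q) := by
          rw [ENNReal.mul_rpow_of_nonneg _ _ hq0.le, ← ENNReal.rpow_mul]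
        have e3 : (μ (pBall p n γ₀ x₀))⁻¹ = μ (pBall p n γ₀ x₀) ^ (-1:ℝ) :=
          (ENNReal.rpow_neg_one _).symm
        rw [e1, e2, e3]
        have e4 : μ (pBall p n γ₀ x₀) ^ (-1:ℝ) * (μ (pBall p n γ₀ x₀) ^ (-(α / n) * q) *
            (C ^ q * μ (pBall p n γ₀ x₀) ^ (1/r * q)))
            = C ^ q * (μ (pBall p n γ₀ x₀) ^ (-1:ℝ) * μ (pBall p n γ₀ x₀) ^ (-(α / n) * q) *
              μ (pBall p n γ₀ x₀) ^ (1/r * q)) := by ring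
        rw [e4, ← ENNReal.rpow_add _ _ h0 htop, ← ENNReal.rpow_add _ _ h0 htop]
        have h1 : (1/r - α/n) * q = 1 := by
          rw [← hq]
          field_simp
        have hexp : (-1:ℝ) + -(α / n) * q + 1/r * q = 0 := by linear_combination h1
        rw [hexp, ENNReal.rpow_zero, mul_one]
end

section
/- Let 0 < α < n, 1 < r < n/α, 1/q = 1/r − α/n, and b locally integrable on ℚ_p^n. If the maximal commutator M_{α,b}^p is bounded from L^r(ℚ_p^n) to L^q(ℚ_p^n), then b ∈ BMO(ℚ_p^n). -/
open MeasureTheory ENNReal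

section Aux

open Metric

instance ultraPi {ι : Type*} [Fintype ι] {X : ι → Type*} [∀ i, PseudoMetricSpace (X i)]
    [∀ i, IsUltrametricDist (X i)] : IsUltrametricDist (∀ i, X i) :=
  ⟨fun f g h => by
    refine (dist_pi_le_iff (le_max_iff.mpr (Or.inl dist_nonneg))).mpr fun i => ?_
    exact (IsUltrametricDist.dist_triangle_max (f i) (g i) (h i)).trans
      (max_le_max (dist_le_pi_dist f g i) (dist_le_pi_dist g h i))⟩

lemma avg_bound {X : Type*} [MeasurableSpace X] (μ : Measure X) (B : Set X) (b : X → ℝ)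
    (hA0 : μ B ≠ 0) (hAt : μ B ≠ ⊤) (hbB : IntegrableOn b B μ) (y : X) :
    ENNReal.ofReal |b y - ⨍ z in B, b z ∂μ| ≤
      (μ B)⁻¹ * ∫⁻ z in B, ENNReal.ofReal |b y - b z| ∂μ := by
  have hATR : (0:ℝ) < (μ B).toReal := ENNReal.toReal_pos hA0 hAt
  have hconst : IntegrableOn (fun _ => b y) B μ := integrableOn_const hAt
  have hint : IntegrableOn (fun z => b y - b z) B μ := hconst.sub hbB
  have h1 : b y - ⨍ z in B, b z ∂μ = (μ B).toReal⁻¹ * ∫ z in B, (b y - b z) ∂μ := by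
    rw [setAverage_eq, integral_sub hconst hbB, setIntegral_const, smul_eq_mul, smul_eq_mul]
    simp only [Measure.real]
    field_simp
  have h2 : |b y - ⨍ z in B, b z ∂μ| ≤ (μ B).toReal⁻¹ * ∫ z in B, |b y - b z| ∂μ := by
    rw [h1, abs_mul, abs_of_nonneg (inv_nonneg.mpr hATR.le)]
    refine mul_le_mul_of_nonneg_left ?_ (inv_nonneg.mpr hATR.le)
    simpa [Real.norm_eq_abs] using
      norm_integral_le_integral_norm (μ := μ.restrict B) (fun z => b y - b z)
  calc ENNReal.ofReal |b y - ⨍ z in B, b z ∂μ|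
      ≤ ENNReal.ofReal ((μ B).toReal⁻¹ * ∫ z in B, |b y - b z| ∂μ) :=
        ENNReal.ofReal_le_ofReal h2
    _ = ENNReal.ofReal ((μ B).toReal⁻¹) * ENNReal.ofReal (∫ z in B, |b y - b z| ∂μ) :=
        ENNReal.ofReal_mul (inv_nonneg.mpr hATR.le)
    _ = (μ B)⁻¹ * ∫⁻ z in B, ENNReal.ofReal |b y - b z| ∂μ := by
        rw [ENNReal.ofReal_inv_of_pos hATR, ENNReal.ofReal_toReal hAt,
          ofReal_integral_eq_lintegral_ofReal hint.abs
            (Filter.Eventually.of_forall fun z => abs_nonneg _)]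

lemma aemeas_T {X : Type*} [MeasurableSpace X] (μ : Measure X) (B : Set X) (hAt : μ B ≠ ⊤)
    (b : X → ℝ) (hb : AEMeasurable b μ) (c : ℝ≥0∞) :
    AEMeasurable (fun y => c * ∫⁻ z in B, ENNReal.ofReal |b y - b z| ∂μ) μ := by
  have : IsFiniteMeasure (μ.restrict B) :=
    ⟨by rwa [Measure.restrict_apply_univ, lt_top_iff_ne_top]⟩
  have hmeas : Measurable fun y => c * ∫⁻ z in B, ENNReal.ofReal |hb.mk b y - hb.mk b z| ∂μ := by
    apply Measurable.const_mul
    apply Measurable.lintegral_prod_right (f := fun y z => ENNReal.ofReal |hb.mk b y - hb.mk b z|)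
    exact ((hb.measurable_mk.comp measurable_fst).sub
      (hb.measurable_mk.comp measurable_snd)).abs.ennreal_ofReal
  refine ⟨_, hmeas, ?_⟩
  filter_upwards [hb.ae_eq_mk] with y hy
  congr 1
  refine lintegral_congr_ae ?_
  filter_upwards [ae_restrict_of_ae hb.ae_eq_mk] with z hz
  rw [hy, hz]

lemma holder_step {X : Type*} [MeasurableSpace X] (μ : Measure X) {B : Set X}
    (hBmeas : MeasurableSet B) (T M : X → ℝ≥0∞) (hT : AEMeasurable T μ)
    (hTM : ∀ y ∈ B, T y ≤ M y) {q q' : ℝ} (hconj : q.HolderConjugate q') :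
    ∫⁻ y in B, T y ∂μ ≤ (∫⁻ y, M y ^ q ∂μ) ^ (1/q) * μ B ^ (1/q') := by
  have h := ENNReal.lintegral_mul_le_Lp_mul_Lq μ hconj (hT.indicator hBmeas)
    ((measurable_one.indicator hBmeas).aemeasurable)
  have e1 : (B.indicator T * B.indicator (1 : X → ℝ≥0∞)) = B.indicator T := by
    funext a
    by_cases ha : a ∈ B <;> simp [Set.indicator_of_mem, Set.indicator_of_notMem, ha]
  have e3 : ∫⁻ a, (B.indicator (1 : X → ℝ≥0∞)) a ^ q' ∂μ = μ B := by
    have h3 : ∀ a, (B.indicator (1 : X → ℝ≥0∞)) a ^ q' = B.indicator (1 : X → ℝ≥0∞) a := by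
      intro a
      by_cases ha : a ∈ B <;>
        simp [Set.indicator_of_mem, Set.indicator_of_notMem, ha,
          ENNReal.zero_rpow_of_pos hconj.symm.pos]
    simp_rw [h3]
    rw [lintegral_indicator hBmeas]
    simp
  rw [e1, e3, lintegral_indicator hBmeas] at h
  refine h.trans (mul_le_mul_left (ENNReal.rpow_le_rpow ?_
    (by have := hconj.pos; positivity)) _)
  refine lintegral_mono fun a => ?_
  by_cases ha : a ∈ B
  · simp only [Set.indicator_of_mem ha]
    exact ENNReal.rpow_le_rpow (hTM a ha) hconj.pos.le
  · simp [Set.indicator_of_notMem ha, ENNReal.zero_rpow_of_pos hconj.pos]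

end Aux

/-- If `0 < α < n`, `1 < r < n/α`, `1/q = 1/r − α/n`, and the maximal commutator
`M_{α,b}^p` is bounded from `L^r(ℚ_p^n)` to `L^q(ℚ_p^n)`, then `b ∈ BMO(ℚ_p^n)`. -/
theorem maxComm_bounded_implies_bmo (p : ℕ) [Fact p.Prime] (n : ℕ)
    [MeasurableSpace (Fin n → ℚ_[p])] [BorelSpace (Fin n → ℚ_[p])]
    (μ : Measure (Fin n → ℚ_[p])) [μ.IsAddHaarMeasure]
    (hμ : μ (Metric.closedBall 0 1) = 1)
    (α : ℝ) (hα₀ : 0 < α) (hαn : α < n)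
    (b : (Fin n → ℚ_[p]) → ℝ) (hbloc : LocallyIntegrable b μ)
    (r q : ℝ) (hr : 1 < r) (hrn : r < n / α) (hq : 1 / q = 1 / r - α / n)
    (hbound : ∃ C : ENNReal, C ≠ ⊤ ∧
      ∀ f : (Fin n → ℚ_[p]) → ℝ, MemLp f (ENNReal.ofReal r) μ →
        (∫⁻ x, maxComm p n μ α b f x ^ q ∂μ) ^ (1 / q) ≤
          C * eLpNorm f (ENNReal.ofReal r) μ) :
    bmoNorm p n μ b ≠ ⊤ := by

  obtain ⟨C, hC, hCb⟩ := hbound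
  have hn : (0:ℝ) < n := hα₀.trans hαn
  have hr0 : (0:ℝ) < r := one_pos.trans hr
  have hiq : 0 < 1 / q := by
    rw [hq, sub_pos, div_lt_div_iff₀ hn hr0]
    have := (lt_div_iff₀ hα₀).mp hrn
    nlinarith
  have hqpos : 0 < q := one_div_pos.mp hiq
  have hq1 : 1 < q := by
    have h1r : 1 / r < 1 := by rw [div_lt_one hr0]; exact hr
    have hαn' : 0 < α / n := div_pos hα₀ hn
    have h1q : 1 / q < 1 := by rw [hq]; linarith
    rwa [div_lt_one hqpos] at h1q
  have hconj : q.HolderConjugate (Real.conjExponent q) := Real.HolderConjugate.conjExponent hq1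
  set q' := Real.conjExponent q with hq'def
  have hq' : 1 / q' = 1 - 1 / q := by
    have := hconj.inv_add_inv_eq_one
    rw [one_div, one_div]; linarith
  suffices key : ∀ (γ : ℤ) (x : Fin n → ℚ_[p]),
      (μ (pBall p n γ x))⁻¹ *
        ∫⁻ y in pBall p n γ x, ENNReal.ofReal |b y - ⨍ z in pBall p n γ x, b z ∂μ| ∂μ ≤ C by
    have hle : bmoNorm p n μ b ≤ C := by
      simp only [bmoNorm]
      exact iSup_le fun γ => iSup_le fun x => key γ x
    exact ne_top_of_le_ne_top hC hle
  intro γ x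
  have hRpos : (0:ℝ) < (p:ℝ) ^ γ := by
    have : (1:ℝ) < p := by exact_mod_cast (Fact.out : p.Prime).one_lt
    exact zpow_pos (by linarith) γ
  set B : Set (Fin n → ℚ_[p]) := pBall p n γ x with hBdef
  have hBmeas : MeasurableSet B := measurableSet_closedBall
  have hA0 : μ B ≠ 0 := (Metric.measure_closedBall_pos μ x hRpos).ne'
  have hAt : μ B ≠ ⊤ := (isCompact_closedBall x ((p:ℝ) ^ γ)).measure_lt_top.ne
  have hbB : IntegrableOn b B μ := hbloc.integrableOn_isCompact (isCompact_closedBall x _)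
  set f₀ : (Fin n → ℚ_[p]) → ℝ := B.indicator (fun _ => 1) with hf₀
  have hf₀mem : MemLp f₀ (ENNReal.ofReal r) μ := memLp_indicator_const _ hBmeas 1 (Or.inr hAt)
  have hrne0 : ENNReal.ofReal r ≠ 0 := by
    simp only [ne_eq, ENNReal.ofReal_eq_zero, not_le]; linarith
  have heLp : eLpNorm f₀ (ENNReal.ofReal r) μ = μ B ^ (1/r) := by
    rw [hf₀, eLpNorm_indicator_const hBmeas hrne0 ENNReal.ofReal_ne_top]
    simp [ENNReal.toReal_ofReal hr0.le]
  set T : (Fin n → ℚ_[p]) → ℝ≥0∞ :=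
    fun y => μ B ^ (α / (n:ℝ) - 1) * ∫⁻ z in B, ENNReal.ofReal |b y - b z| ∂μ with hT
  have hTmeas : AEMeasurable T μ :=
    aemeas_T μ B hAt b hbloc.aestronglyMeasurable.aemeasurable _
  have hTM : ∀ y ∈ B, T y ≤ maxComm p n μ α b f₀ y := by
    intro y hy
    have hby : pBall p n γ y = B := (IsUltrametricDist.closedBall_eq_of_mem hy).symm
    have hTy : T y = μ (pBall p n γ y) ^ (α / (n:ℝ) - 1) *
        ∫⁻ z in pBall p n γ y, ENNReal.ofReal (|b y - b z| * |f₀ z|) ∂μ := by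
      rw [hby, hT]
      beta_reduce
      congr 1
      refine setLIntegral_congr_fun hBmeas (fun z hz => ?_)
      rw [hf₀]
      simp [Set.indicator_of_mem hz]
    rw [hTy, maxComm]
    exact le_iSup (fun γ' : ℤ => μ (pBall p n γ' y) ^ (α / (n:ℝ) - 1) *
      ∫⁻ z in pBall p n γ' y, ENNReal.ofReal (|b y - b z| * |f₀ z|) ∂μ) γ
  have hHold : ∫⁻ y in B, T y ∂μ ≤ (C * μ B ^ (1/r)) * μ B ^ (1/q') := by
    refine (holder_step μ hBmeas T (maxComm p n μ α b f₀) hTmeas hTM hconj).trans ?_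
    refine mul_le_mul_left ?_ _
    calc (∫⁻ y, maxComm p n μ α b f₀ y ^ q ∂μ) ^ (1/q)
        ≤ C * eLpNorm f₀ (ENNReal.ofReal r) μ := hCb f₀ hf₀mem
      _ = C * μ B ^ (1/r) := by rw [heLp]
  have hmain : (μ B)⁻¹ * (∫⁻ y in B, ENNReal.ofReal |b y - ⨍ z in B, b z ∂μ| ∂μ) ≤
      (μ B)⁻¹ * (μ B ^ (-(α / (n:ℝ))) * ((C * μ B ^ (1/r)) * μ B ^ (1/q'))) := by
    refine mul_le_mul_right ?_ _
    calc (∫⁻ y in B, ENNReal.ofReal |b y - ⨍ z in B, b z ∂μ| ∂μ)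
        ≤ ∫⁻ y in B, μ B ^ (-(α / (n:ℝ))) * T y ∂μ := by
          refine lintegral_mono fun y => ?_
          refine (avg_bound μ B b hA0 hAt hbB y).trans (le_of_eq ?_)
          rw [hT]
          simp only
          rw [← mul_assoc, ← ENNReal.rpow_add _ _ hA0 hAt]
          congr 1
          rw [show -(α / (n:ℝ)) + (α / (n:ℝ) - 1) = -1 by ring, ENNReal.rpow_neg_one]
      _ = μ B ^ (-(α / (n:ℝ))) * ∫⁻ y in B, T y ∂μ := lintegral_const_mul' _ _ (by
          simp [ENNReal.rpow_eq_top_iff, hA0, hAt])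
      _ ≤ _ := mul_le_mul_right hHold _
  refine hmain.trans (le_of_eq ?_)
  rw [← ENNReal.rpow_neg_one (μ B)]
  calc (μ B) ^ (-1:ℝ) * ((μ B) ^ (-(α / (n:ℝ))) * ((C * (μ B) ^ (1/r)) * (μ B) ^ (1/q')))
      = C * ((μ B) ^ (-1:ℝ) * (μ B) ^ (-(α / (n:ℝ))) * (μ B) ^ (1/r) * (μ B) ^ (1/q')) := by
        ring
    _ = C * (μ B) ^ ((-1:ℝ) + (-(α / (n:ℝ))) + 1/r + 1/q') := by
        rw [← ENNReal.rpow_add _ _ hA0 hAt, ← ENNReal.rpow_add _ _ hA0 hAt,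
          ← ENNReal.rpow_add _ _ hA0 hAt]
    _ = C := by
        rw [show (-1:ℝ) + (-(α / (n:ℝ))) + 1/r + 1/q' = 0 by linarith [hq, hq'],
          ENNReal.rpow_zero, mul_one]
end
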